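/- Let π be a 231-avoiding permutation of size k with m = π⁻¹(k), and let σ be a 231-avoiding permutation of size n with ℓ = σ⁻¹(n). Then the number of consecutive occurrences of π in σ satisfies: cocc(π, σ) = cocc(π, pat_{[1,ℓ−1]}(σ)) + cocc(π, pat_{[ℓ+1,n]}(σ)) + [pat_{[ℓ−m+1, ℓ+k−m]}(σ) = π], where the last term is the indicator that ℓ−m+1 ≥ 1, ℓ+k−m ≤ n, and the pattern of σ on the interval [ℓ−m+1, ℓ+k−m] equals π. -/

import Mathlib

open scoped Classical

/-- `σ` avoids the pattern 231. -/
def avoids231 {n : ℕ} (σ : Equiv.Perm (Fin n)) : Prop :=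
  ∀ i j l : Fin n, i < j → j < l → ¬(σ l < σ i ∧ σ i < σ j)

/-- The number of consecutive occurrences of the pattern `π` (of size `k`) in the finite
sequence `f` of distinct values in a linear order: the number of intervals of `k` consecutive
positions on which `f` is in the same relative order as `π`.  Since consecutive occurrences
only depend on relative order, for `f` the subsequence of a permutation `σ` on an interval `I`
this is exactly `cocc(π, pat_I(σ))`. -/
noncomputable def coccSeq {α : Type*} [LinearOrder α] {k : ℕ} (π : Equiv.Perm (Fin k))
    {m : ℕ} (f : Fin m → α) : ℕ :=
  ((Finset.range (m + 1)).filter (fun a =>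
    ∃ h : a + k ≤ m, ∀ s t : Fin k,
      (f ⟨a + s.1, by have := s.isLt; omega⟩ < f ⟨a + t.1, by have := t.isLt; omega⟩
        ↔ π s < π t))).card

noncomputable def occSet {α : Type*} [LinearOrder α] {k : ℕ} (π : Equiv.Perm (Fin k))
    {m : ℕ} (f : Fin m → α) : Finset ℕ :=
  ((Finset.range (m + 1)).filter (fun a =>
    ∃ h : a + k ≤ m, ∀ s t : Fin k,
      (f ⟨a + s.1, by have := s.isLt; omega⟩ < f ⟨a + t.1, by have := t.isLt; omega⟩
        ↔ π s < π t)))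

lemma coccSeq_eq_card {α : Type*} [LinearOrder α] {k : ℕ} (π : Equiv.Perm (Fin k))
    {m : ℕ} (f : Fin m → α) : coccSeq π f = (occSet π f).card := rfl

lemma mem_occSet {α : Type*} [LinearOrder α] {k : ℕ} (π : Equiv.Perm (Fin k))
    {m : ℕ} (f : Fin m → α) (a : ℕ) :
    a ∈ occSet π f ↔ a + k ≤ m ∧ ∀ s t : Fin k, ∀ (ps : a + s.1 < m) (pt : a + t.1 < m),
      (f ⟨a + s.1, ps⟩ < f ⟨a + t.1, pt⟩ ↔ π s < π t) := by
  simp only [occSet, Finset.mem_filter, Finset.mem_range]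
  constructor
  · rintro ⟨_, h, hst⟩
    exact ⟨h, fun s t ps pt => hst s t⟩
  · rintro ⟨h, hst⟩
    exact ⟨by omega, h, fun s t => hst s t _ _⟩

lemma sigma_congr {n : ℕ} (σ : Equiv.Perm (Fin n)) {i j : ℕ} (hi : i < n) (hj : j < n)
    (h : i = j) : σ ⟨i, hi⟩ = σ ⟨j, hj⟩ := by subst h; rfl

/-- The recursion for consecutive occurrences of a 231-avoiding pattern `π` in a 231-avoiding
permutation `σ` (0-indexed): if `m0` is the position of the maximum of `π` and `l0` the
position of the maximum of `σ`, then `cocc(π,σ)` is the sum of the numbers of consecutive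
occurrences in the part before the maximum and in the part after the maximum, plus the
indicator that the interval of length `k` whose `m0`-th entry is the maximum of `σ` fits
inside `[0,n)` and induces exactly the pattern `π`. -/
theorem cocc_recursion (k n : ℕ) (π : Equiv.Perm (Fin k)) (σ : Equiv.Perm (Fin n))
    (hπ : avoids231 π) (hσ : avoids231 σ)
    (m0 l0 : ℕ) (hm0k : m0 < k) (hl0n : l0 < n)
    (hm0 : (π ⟨m0, hm0k⟩ : ℕ) = k - 1) (hl0 : (σ ⟨l0, hl0n⟩ : ℕ) = n - 1) :
    coccSeq π (fun i : Fin n => σ i)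
      = coccSeq π (fun s : Fin l0 => σ ⟨s.1, Nat.lt_trans s.isLt hl0n⟩)
        + coccSeq π (fun s : Fin (n - (l0 + 1)) => σ ⟨l0 + 1 + s.1, by
            have := s.isLt; omega⟩)
        + (if ∃ _ : m0 ≤ l0, ∃ h : l0 - m0 + k ≤ n, ∀ s t : Fin k,
              (σ ⟨l0 - m0 + s.1, by have := s.isLt; omega⟩
                < σ ⟨l0 - m0 + t.1, by have := t.isLt; omega⟩ ↔ π s < π t)
           then 1 else 0) := by
  classical
  rw [coccSeq_eq_card, coccSeq_eq_card, coccSeq_eq_card]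
  set A := occSet π (fun i : Fin n => σ i) with hAdef
  have hπmax : ∀ t : Fin k, t ≠ ⟨m0, hm0k⟩ → π t < π ⟨m0, hm0k⟩ := by
    intro t ht
    have h1 : π t ≠ π ⟨m0, hm0k⟩ := fun h => ht (π.injective h)
    have h2 : (π t : ℕ) < k := (π t).isLt
    rw [Fin.lt_def, hm0]
    rcases Nat.lt_or_ge (π t : ℕ) (k - 1) with h | h
    · exact h
    · exact absurd (Fin.ext (by omega : (π t : ℕ) = (π ⟨m0, hm0k⟩ : ℕ))) h1
  -- key uniqueness: a window containing l0 matching π must start at l0 - m0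
  have key : ∀ a, a ∈ A → a ≤ l0 → l0 < a + k → m0 ≤ l0 ∧ a = l0 - m0 := by
    intro a hA hal hla
    rw [mem_occSet] at hA
    obtain ⟨hkn, hm⟩ := hA
    have hs0 : ((⟨l0 - a, by omega⟩ : Fin k) : ℕ) = m0 := by
      by_contra hne
      have hne' : (⟨l0 - a, by omega⟩ : Fin k) ≠ ⟨m0, hm0k⟩ := by
        intro h; exact hne (by simpa using congrArg Fin.val h)
      have hlt := hπmax _ hne'
      have h2 := (hm ⟨l0 - a, by omega⟩ ⟨m0, hm0k⟩ (by simp; omega) (by simp; omega)).mpr hlt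
      have h3 : σ ⟨a + ((⟨l0 - a, by omega⟩ : Fin k) : ℕ), by simp; omega⟩
          = σ ⟨l0, hl0n⟩ := sigma_congr σ _ _ (by simp; omega)
      rw [h3] at h2
      rw [Fin.lt_def, hl0] at h2
      have := (σ ⟨a + ((⟨m0, hm0k⟩ : Fin k) : ℕ), by simp; omega⟩).isLt
      omega
    simp only [] at hs0
    constructor <;> omega
  -- split A into three parts
  have hsplit : A.card
      = ((A.filter (fun a => a + k ≤ l0)).card
        + ((A.filter (fun a => ¬ a + k ≤ l0)).filter (fun a => l0 + 1 ≤ a)).card)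
        + ((A.filter (fun a => ¬ a + k ≤ l0)).filter (fun a => ¬ l0 + 1 ≤ a)).card := by
    rw [add_assoc, Finset.card_filter_add_card_filter_not (fun a => l0 + 1 ≤ a),
      Finset.card_filter_add_card_filter_not (fun a => a + k ≤ l0)]
  rw [hsplit]
  congr 1
  · congr 1
    · -- left part
      refine congrArg Finset.card ?_
      ext a
      rw [Finset.mem_filter, hAdef, mem_occSet, mem_occSet]
      constructor
      · rintro ⟨⟨hn, hm⟩, hl⟩
        exact ⟨hl, fun s t ps pt => hm s t (by omega) (by omega)⟩
      · rintro ⟨hl, hm⟩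
        exact ⟨⟨by omega, fun s t ps pt => hm s t (by omega) (by omega)⟩, hl⟩
    · -- right part
      apply Finset.card_nbij' (fun a => a - (l0 + 1)) (fun b => l0 + 1 + b)
      · intro a ha
        simp only [Finset.mem_coe, Finset.mem_filter, hAdef, mem_occSet] at ha
        obtain ⟨⟨⟨hkn, hm⟩, h1⟩, h2⟩ := ha
        rw [Finset.mem_coe, mem_occSet]
        dsimp only
        refine ⟨by omega, fun s t ps pt => ?_⟩
        have e1 : σ ⟨l0 + 1 + ((⟨a - (l0 + 1) + s.1, ps⟩ : Fin (n - (l0+1))) : ℕ), by simp; omega⟩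
            = σ ⟨a + s.1, by omega⟩ := sigma_congr σ _ _ (by simp; omega)
        have e2 : σ ⟨l0 + 1 + ((⟨a - (l0 + 1) + t.1, pt⟩ : Fin (n - (l0+1))) : ℕ), by simp; omega⟩
            = σ ⟨a + t.1, by omega⟩ := sigma_congr σ _ _ (by simp; omega)
        show σ _ < σ _ ↔ _
        rw [e1, e2]
        exact hm s t _ _
      · intro b hb
        rw [Finset.mem_coe, mem_occSet] at hb
        obtain ⟨hkn, hm⟩ := hb
        simp only [Finset.mem_coe, Finset.mem_filter, hAdef, mem_occSet]
        refine ⟨⟨⟨by omega, fun s t ps pt => ?_⟩, by omega⟩, by omega⟩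
        have e1 : σ ⟨l0 + 1 + b + s.1, ps⟩
            = σ ⟨l0 + 1 + ((⟨b + s.1, by omega⟩ : Fin (n - (l0+1))) : ℕ), by simp; omega⟩ :=
          sigma_congr σ _ _ (by simp; omega)
        have e2 : σ ⟨l0 + 1 + b + t.1, pt⟩
            = σ ⟨l0 + 1 + ((⟨b + t.1, by omega⟩ : Fin (n - (l0+1))) : ℕ), by simp; omega⟩ :=
          sigma_congr σ _ _ (by simp; omega)
        rw [e1, e2]
        exact hm s t (by first | omega | (simp; omega)) (by first | omega | (simp; omega))
      · intro a ha
        simp only [Finset.mem_coe, Finset.mem_filter] at ha ⊢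
        omega
      · intro b _
        dsimp only
        omega
  · -- the indicator part
    have hF3 : ((A.filter (fun a => ¬ a + k ≤ l0)).filter (fun a => ¬ l0 + 1 ≤ a))
        = if ∃ _ : m0 ≤ l0, ∃ h : l0 - m0 + k ≤ n, ∀ s t : Fin k,
              (σ ⟨l0 - m0 + s.1, by have := s.isLt; omega⟩
                < σ ⟨l0 - m0 + t.1, by have := t.isLt; omega⟩ ↔ π s < π t)
          then {l0 - m0} else ∅ := by
      split_ifs with hcond
      · ext a
        simp only [Finset.mem_filter, Finset.mem_singleton]
        constructor
        · rintro ⟨⟨hmem, h1⟩, h2⟩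
          exact (key a hmem (by omega) (by omega)).2
        · rintro rfl
          obtain ⟨hml, hn, hmatch⟩ := hcond
          refine ⟨⟨?_, by omega⟩, by omega⟩
          rw [hAdef, mem_occSet]
          exact ⟨by omega, fun s t ps pt => hmatch s t⟩
      · ext a
        simp only [Finset.mem_filter, Finset.notMem_empty, iff_false, not_and]
        intro hmem h1
        obtain ⟨hmemA, h0⟩ := hmem
        obtain ⟨hml, ha⟩ := key a hmemA (by omega) (by omega)
        subst ha
        rw [hAdef, mem_occSet] at hmemA
        obtain ⟨hkn, hm⟩ := hmemA
        exact hcond ⟨hml, by omega, fun s t => hm s t _ _⟩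
    rw [hF3]
    split_ifs <;> simp
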